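/- For positive reals a ≠ b and t ∈ (0,1): a^(1−t)b^t ≤ (1/e)·((1−t)a + t·b)^{((1−2t)(tb+(1−t)a))/(t(1−t)(b−a))}·(b^{tb/(1−t)}/a^{((1−t)a)/t})^{1/(b−a)} ≤ (1−t)a + t·b. -/

import Mathlib

open Set

private lemma log_ge_one_sub_inv {x : ℝ} (hx : 0 < x) : 1 - 1/x ≤ Real.log x := by
  have h := Real.log_le_sub_one_of_pos (show 0 < 1/x by positivity)
  rw [one_div, Real.log_inv] at h
  rw [one_div]
  linarith

private lemma keyU {u : ℝ} (hu : 1 ≤ u) : 2*u*Real.log u ≤ u^2 - 1 := by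
  have hmono : MonotoneOn (fun u : ℝ => u^2 - 1 - 2*u*Real.log u) (Ici 1) := by
    have hder : ∀ x ∈ interior (Ici (1:ℝ)),
        HasDerivAt (fun u : ℝ => u^2 - 1 - 2*u*Real.log u) (2*x - (2*Real.log x + 2)) x := by
      intro x hx
      rw [interior_Ici, mem_Ioi] at hx
      have hx0 : (0:ℝ) < x := lt_trans one_pos hx
      have h1 : HasDerivAt (fun u : ℝ => u^2 - 1) (2*x) x := by
        simpa using (hasDerivAt_pow 2 x).sub_const 1
      have h2 : HasDerivAt (fun u : ℝ => 2*u*Real.log u) (2*Real.log x + 2) x := by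
        have h3 : HasDerivAt (fun u : ℝ => u*Real.log u) (1*Real.log x + x*x⁻¹) x :=
          (hasDerivAt_id x).mul (Real.hasDerivAt_log (ne_of_gt hx0))
        have h4 := h3.const_mul (2:ℝ)
        have he : 2*(1*Real.log x + x*x⁻¹) = 2*Real.log x + 2 := by
          rw [mul_inv_cancel₀ (ne_of_gt hx0)]; ring
        rw [he] at h4
        have e : (fun u : ℝ => 2*u*Real.log u) = fun y => 2*(y*Real.log y) := by funext u; ring
        rw [e]; exact h4
      exact h1.sub h2
    apply monotoneOn_of_deriv_nonneg (convex_Ici 1)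
    · apply ContinuousOn.sub
      · exact (continuousOn_pow 2).sub continuousOn_const
      · exact (continuousOn_const.mul continuousOn_id).mul
          (Real.continuousOn_log.mono (by intro x hx; simp at hx ⊢; linarith))
    · intro x hx
      exact (hder x hx).differentiableAt.differentiableWithinAt
    · intro x hx
      rw [(hder x hx).deriv]
      rw [interior_Ici, mem_Ioi] at hx
      have := Real.log_le_sub_one_of_pos (lt_trans one_pos hx)
      linarith
  have h := hmono (self_mem_Ici) (mem_Ici.mpr hu) hu
  simp only [Real.log_one] at h
  norm_num at h
  linarith

private lemma keyL {u : ℝ} (hu : 1 ≤ u) : 2*(u-1) ≤ (u+1)*Real.log u := by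
  have hmono : MonotoneOn (fun u : ℝ => (u+1)*Real.log u - 2*(u-1)) (Ici 1) := by
    have hder : ∀ x ∈ interior (Ici (1:ℝ)),
        HasDerivAt (fun u : ℝ => (u+1)*Real.log u - 2*(u-1))
          ((Real.log x + (x+1)*x⁻¹) - 2) x := by
      intro x hx
      rw [interior_Ici, mem_Ioi] at hx
      have hx0 : (0:ℝ) < x := lt_trans one_pos hx
      have h3 : HasDerivAt (fun u : ℝ => (u+1)*Real.log u) (1*Real.log x + (x+1)*x⁻¹) x :=
        ((hasDerivAt_id x).add_const 1).mul (Real.hasDerivAt_log (ne_of_gt hx0))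
      have h4 : HasDerivAt (fun u : ℝ => 2*(u-1)) 2 x := by
        simpa using ((hasDerivAt_id x).sub_const 1).const_mul (2:ℝ)
      have h5 := h3.sub h4
      rw [one_mul] at h5
      exact h5
    apply monotoneOn_of_deriv_nonneg (convex_Ici 1)
    · apply ContinuousOn.sub
      · exact (continuousOn_id.add continuousOn_const).mul
          (Real.continuousOn_log.mono (by intro x hx; simp at hx ⊢; linarith))
      · exact continuousOn_const.mul (continuousOn_id.sub continuousOn_const)
    · intro x hx
      exact (hder x hx).differentiableAt.differentiableWithinAt
    · intro x hx
      rw [(hder x hx).deriv]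
      rw [interior_Ici, mem_Ioi] at hx
      have hx0 : (0:ℝ) < x := lt_trans one_pos hx
      have h := log_ge_one_sub_inv hx0
      have hxi : (x+1)*x⁻¹ = 1 + 1/x := by field_simp
      rw [hxi]
      linarith
  have h := hmono (self_mem_Ici) (mem_Ici.mpr hu) hu
  simp only [Real.log_one] at h
  norm_num at h
  linarith

private lemma keyU' {x y : ℝ} (hx : 0 < x) (hxy : x ≤ y) :
    2*x*y*(Real.log y - Real.log x) ≤ y^2 - x^2 := by
  have hy : 0 < y := lt_of_lt_of_le hx hxy
  have hu : 1 ≤ y/x := (one_le_div hx).2 hxy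
  have h := keyU hu
  rw [Real.log_div hy.ne' hx.ne'] at h
  have h2 := mul_le_mul_of_nonneg_left h (sq_nonneg x)
  have e1 : x^2*(2*(y/x)*(Real.log y - Real.log x)) = 2*x*y*(Real.log y - Real.log x) := by
    field_simp
  have e2 : x^2*((y/x)^2 - 1) = y^2 - x^2 := by
    field_simp
  rw [e1, e2] at h2
  exact h2

private lemma keyL' {x y : ℝ} (hx : 0 < x) (hxy : x ≤ y) :
    2*(y - x) ≤ (y + x)*(Real.log y - Real.log x) := by
  have hy : 0 < y := lt_of_lt_of_le hx hxy
  have hu : 1 ≤ y/x := (one_le_div hx).2 hxy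
  have h := keyL hu
  rw [Real.log_div hy.ne' hx.ne'] at h
  have h2 := mul_le_mul_of_nonneg_left h hx.le
  have e1 : x*(2*(y/x - 1)) = 2*(y - x) := by field_simp
  have e2 : x*((y/x + 1)*(Real.log y - Real.log x)) = (y + x)*(Real.log y - Real.log x) := by
    field_simp
  rw [e1, e2] at h2
  exact h2

private lemma logccl {x c : ℝ} (hx : 0 < x) (hc : 0 < c) :
    c*(Real.log x - Real.log c) ≤ x - c := by
  have h := Real.log_le_sub_one_of_pos (show 0 < x/c by positivity)
  rw [Real.log_div hx.ne' hc.ne'] at h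
  have h2 := mul_le_mul_of_nonneg_left h hc.le
  have e : c*(x/c - 1) = x - c := by field_simp
  rw [e] at h2
  exact h2

private lemma mainlog (a b t : ℝ) (ha : 0 < a) (hab : a < b) (ht0 : 0 < t) (ht1 : t < 1) :
    (1 - t)*Real.log a + t*Real.log b ≤
      -1 + (1 - 2*t) * (t * b + (1 - t) * a) / (t * (1 - t) * (b - a)) *
          Real.log ((1 - t) * a + t * b)
        + 1 / (b - a) * (t * b / (1 - t) * Real.log b - (1 - t) * a / t * Real.log a) ∧
    -1 + (1 - 2*t) * (t * b + (1 - t) * a) / (t * (1 - t) * (b - a)) *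
          Real.log ((1 - t) * a + t * b)
        + 1 / (b - a) * (t * b / (1 - t) * Real.log b - (1 - t) * a / t * Real.log a) ≤
      Real.log ((1 - t) * a + t * b) := by
  have hb : 0 < b := lt_trans ha hab
  have h1t : 0 < 1 - t := by linarith
  have hc : 0 < (1 - t) * a + t * b := by positivity
  have hac : a ≤ (1 - t) * a + t * b := by nlinarith
  have hcb : (1 - t) * a + t * b ≤ b := by nlinarith
  have hba : 0 < b - a := by linarith
  have hD : 0 < t * (1 - t) * (b - a) := by positivity
  have q1 := keyU' ha hac
  have q2 := keyU' hc hcb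
  have p3 := keyL' ha hac
  have p4 := keyL' hc hcb
  have k5 : (1 - t)*Real.log a + t*Real.log b ≤ Real.log ((1 - t) * a + t * b) := by
    have h5a := mul_le_mul_of_nonneg_left (logccl ha hc) h1t.le
    have h5b := mul_le_mul_of_nonneg_left (logccl hb hc) ht0.le
    have h6 : ((1 - t) * a + t * b) *
        ((1 - t)*Real.log a + t*Real.log b - Real.log ((1 - t) * a + t * b)) ≤
        ((1 - t) * a + t * b) * 0 := by nlinarith [h5a, h5b]
    have := le_of_mul_le_mul_left h6 hc
    linarith
  have hq1 := mul_le_mul_of_nonneg_left q1 (sq_nonneg (1 - t))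
  have hq2 := mul_le_mul_of_nonneg_left q2 (sq_nonneg t)
  have hp3 := mul_le_mul_of_nonneg_left p3 (sq_nonneg (1 - t))
  have hp4 := mul_le_mul_of_nonneg_left p4 (sq_nonneg t)
  have hk5 := mul_le_mul_of_nonneg_left k5 hD.le
  have hmid : -1 + (1 - 2*t) * (t * b + (1 - t) * a) / (t * (1 - t) * (b - a)) *
          Real.log ((1 - t) * a + t * b)
        + 1 / (b - a) * (t * b / (1 - t) * Real.log b - (1 - t) * a / t * Real.log a)
      = ((1 - 2*t)*((1 - t)*a + t*b)*Real.log ((1 - t) * a + t * b)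
          + t^2*b*Real.log b - (1 - t)^2*a*Real.log a - t*(1 - t)*(b - a))
        / (t*(1 - t)*(b - a)) := by
    have h1 : t ≠ 0 := ht0.ne'
    have h2 : (1:ℝ) - t ≠ 0 := h1t.ne'
    have h3 : b - a ≠ 0 := hba.ne'
    field_simp
    ring
  rw [hmid]
  constructor
  · rw [le_div_iff₀ hD]
    linarith [hp3, hp4, hk5]
  · rw [div_le_iff₀ hD]
    have H : (2*((1 - t)*a + t*b)) *
        ((1 - 2*t)*((1 - t)*a + t*b)*Real.log ((1 - t) * a + t * b)
          + t^2*b*Real.log b - (1 - t)^2*a*Real.log a - t*(1 - t)*(b - a))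
        ≤ (2*((1 - t)*a + t*b)) *
        (Real.log ((1 - t) * a + t * b) * (t*(1 - t)*(b - a))) := by
      linarith [hq1, hq2]
    exact le_of_mul_le_mul_left H (by positivity)

theorem geom_le_weighted_identric_le_arith (a b t : ℝ) (ha : 0 < a) (hb : 0 < b)
    (hab : a ≠ b) (ht : t ∈ Ioo (0:ℝ) 1) :
    a ^ (1 - t) * b ^ t ≤
      (1 / Real.exp 1) *
        ((1 - t) * a + t * b) ^ ((1 - 2*t) * (t * b + (1 - t) * a) / (t * (1 - t) * (b - a))) *
        ((b ^ (t * b / (1 - t))) / (a ^ ((1 - t) * a / t))) ^ (1 / (b - a)) ∧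
    (1 / Real.exp 1) *
        ((1 - t) * a + t * b) ^ ((1 - 2*t) * (t * b + (1 - t) * a) / (t * (1 - t) * (b - a))) *
        ((b ^ (t * b / (1 - t))) / (a ^ ((1 - t) * a / t))) ^ (1 / (b - a)) ≤
      (1 - t) * a + t * b := by
  obtain ⟨ht0, ht1⟩ := ht
  have h1t : 0 < 1 - t := by linarith
  have hA : 0 < (1 - t) * a + t * b := by positivity
  have hbb : 0 < b ^ (t * b / (1 - t)) := Real.rpow_pos_of_pos hb _
  have haa : 0 < a ^ ((1 - t) * a / t) := Real.rpow_pos_of_pos ha _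
  have hI : 0 < (1 / Real.exp 1) *
      ((1 - t) * a + t * b) ^ ((1 - 2*t) * (t * b + (1 - t) * a) / (t * (1 - t) * (b - a))) *
      ((b ^ (t * b / (1 - t))) / (a ^ ((1 - t) * a / t))) ^ (1 / (b - a)) := by
    have h1 : 0 < ((1 - t) * a + t * b) ^
        ((1 - 2*t) * (t * b + (1 - t) * a) / (t * (1 - t) * (b - a))) :=
      Real.rpow_pos_of_pos hA _
    have h2 : 0 < ((b ^ (t * b / (1 - t))) / (a ^ ((1 - t) * a / t))) ^ (1 / (b - a)) :=
      Real.rpow_pos_of_pos (div_pos hbb haa) _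
    positivity
  have hG : 0 < a ^ (1 - t) * b ^ t := by
    have := Real.rpow_pos_of_pos ha (1 - t)
    have := Real.rpow_pos_of_pos hb t
    positivity
  have hlogI : Real.log ((1 / Real.exp 1) *
      ((1 - t) * a + t * b) ^ ((1 - 2*t) * (t * b + (1 - t) * a) / (t * (1 - t) * (b - a))) *
      ((b ^ (t * b / (1 - t))) / (a ^ ((1 - t) * a / t))) ^ (1 / (b - a)))
      = -1 + (1 - 2*t) * (t * b + (1 - t) * a) / (t * (1 - t) * (b - a)) *
          Real.log ((1 - t) * a + t * b)
        + 1 / (b - a) * (t * b / (1 - t) * Real.log b - (1 - t) * a / t * Real.log a) := by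
    rw [Real.log_mul (by positivity) (by positivity), Real.log_mul (by positivity) (by positivity),
      Real.log_rpow hA, Real.log_rpow (div_pos hbb haa), Real.log_div hbb.ne' haa.ne',
      Real.log_rpow hb, Real.log_rpow ha, one_div (Real.exp 1), Real.log_inv, Real.log_exp]
  have hlogG : Real.log (a ^ (1 - t) * b ^ t) = (1 - t)*Real.log a + t*Real.log b := by
    rw [Real.log_mul (Real.rpow_pos_of_pos ha _).ne' (Real.rpow_pos_of_pos hb _).ne',
      Real.log_rpow ha, Real.log_rpow hb]
  have key : (1 - t)*Real.log a + t*Real.log b ≤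
      -1 + (1 - 2*t) * (t * b + (1 - t) * a) / (t * (1 - t) * (b - a)) *
          Real.log ((1 - t) * a + t * b)
        + 1 / (b - a) * (t * b / (1 - t) * Real.log b - (1 - t) * a / t * Real.log a) ∧
      -1 + (1 - 2*t) * (t * b + (1 - t) * a) / (t * (1 - t) * (b - a)) *
          Real.log ((1 - t) * a + t * b)
        + 1 / (b - a) * (t * b / (1 - t) * Real.log b - (1 - t) * a / t * Real.log a) ≤
      Real.log ((1 - t) * a + t * b) := by
    rcases lt_or_gt_of_ne hab with h | h
    · exact mainlog a b t ha h ht0 ht1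
    · have hswap := mainlog b a (1 - t) hb h (by linarith) (by linarith)
      have earg : (1 - (1 - t)) * b + (1 - t) * a = (1 - t) * a + t * b := by ring
      rw [earg] at hswap
      have h1 : t ≠ 0 := ht0.ne'
      have h2 : (1:ℝ) - t ≠ 0 := h1t.ne'
      have h3 : a - b ≠ 0 := sub_ne_zero.mpr hab
      have h4 : b - a ≠ 0 := sub_ne_zero.mpr hab.symm
      have h5 : (1:ℝ) - (1 - t) ≠ 0 := by
        intro hh
        apply h1
        linarith
      have emid : -1 + (1 - 2*(1 - t)) * ((1 - t) * a + (1 - (1 - t)) * b) /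
            ((1 - t) * (1 - (1 - t)) * (a - b)) * Real.log ((1 - t) * a + t * b)
          + 1 / (a - b) * ((1 - t) * a / (1 - (1 - t)) * Real.log a
              - (1 - (1 - t)) * b / (1 - t) * Real.log b)
          = -1 + (1 - 2*t) * (t * b + (1 - t) * a) / (t * (1 - t) * (b - a)) *
              Real.log ((1 - t) * a + t * b)
            + 1 / (b - a) * (t * b / (1 - t) * Real.log b - (1 - t) * a / t * Real.log a) := by
        field_simp
        ring
      rw [emid] at hswap
      constructor
      · linarith [hswap.1]
      · linarith [hswap.2]
  constructor
  · rw [← Real.log_le_log_iff hG hI, hlogG, hlogI]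
    exact key.1
  · rw [← Real.log_le_log_iff hI hA, hlogI]
    exact key.2
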